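/- Let Θ : (0,∞) → (0,∞) be C¹ with Θ'(s) > 0 for all s > 0, Θ(1) = 1, Θ'(1) < 1, (Θ(s) - s)(s - 1) < 0 for all s ≠ 1, Θ(s) → 0 as s → 0⁺ and Θ(s) → ∞ as s → ∞. Fix s₀⁻ ∈ (0,1) and define Ψ(s) = exp(∫_{s₀⁻}^s 1/(τ - Θ(τ)) dτ) for s ∈ (0,1). Then Ψ is strictly decreasing on (0,1) and Ψ(s) → 0 as s → 1⁻. -/

import Mathlib

open Real Filter Set

theorem stmt_6 (Θ dΘ : ℝ → ℝ) (s₀ : ℝ) (hs₀ : s₀ ∈ Set.Ioo (0 : ℝ) 1)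
    (hpos : ∀ s, 0 < s → 0 < Θ s)
    (hderiv : ∀ s, 0 < s → HasDerivAt Θ (dΘ s) s)
    (hdpos : ∀ s, 0 < s → 0 < dΘ s)
    (hone : Θ 1 = 1)
    (hd1 : dΘ 1 < 1)
    (hcontr : ∀ s, 0 < s → s ≠ 1 → (Θ s - s) * (s - 1) < 0)
    (hlim0 : Filter.Tendsto Θ (nhdsWithin 0 (Set.Ioi 0)) (nhds 0))
    (hlimtop : Filter.Tendsto Θ Filter.atTop Filter.atTop) :
    StrictAntiOn (fun s => Real.exp (∫ τ in s₀..s, (τ - Θ τ)⁻¹)) (Set.Ioo (0 : ℝ) 1) ∧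
    Filter.Tendsto (fun s => Real.exp (∫ τ in s₀..s, (τ - Θ τ)⁻¹))
      (nhdsWithin 1 (Set.Iio 1)) (nhds 0) := by
  set f : ℝ → ℝ := fun τ => (τ - Θ τ)⁻¹ with hf
  have hΘcont : ContinuousOn Θ (Set.Ioi 0) := fun x hx =>
    (hderiv x hx).continuousAt.continuousWithinAt
  have hmono : StrictMonoOn Θ (Set.Ioi 0) := by
    apply strictMonoOn_of_deriv_pos (convex_Ioi 0) hΘcont
    intro x hx
    rw [interior_Ioi] at hx
    rw [(hderiv x hx).deriv]
    exact hdpos x hx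
  have hgt : ∀ τ ∈ Set.Ioo (0:ℝ) 1, τ < Θ τ := by
    intro τ hτ
    have := hcontr τ hτ.1 (ne_of_lt hτ.2)
    nlinarith [hτ.2]
  have hlt1 : ∀ τ ∈ Set.Ioo (0:ℝ) 1, Θ τ < 1 := by
    intro τ hτ
    have := hmono hτ.1 (by norm_num : (1:ℝ) ∈ Set.Ioi (0:ℝ)) hτ.2
    rwa [hone] at this
  have hneg : ∀ τ ∈ Set.Ioo (0:ℝ) 1, τ - Θ τ < 0 := fun τ hτ =>
    sub_neg.2 (hgt τ hτ)
  have hfcont : ContinuousOn f (Set.Ioo 0 1) := by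
    apply ContinuousOn.inv₀
    · exact (continuousOn_id.sub (hΘcont.mono (Set.Ioo_subset_Ioi_self)))
    · exact fun τ hτ => ne_of_lt (hneg τ hτ)
  have hIoo : Set.OrdConnected (Set.Ioo (0:ℝ) 1) := Set.ordConnected_Ioo
  have hint : ∀ a ∈ Set.Ioo (0:ℝ) 1, ∀ b ∈ Set.Ioo (0:ℝ) 1,
      IntervalIntegrable f MeasureTheory.volume a b := by
    intro a ha b hb
    exact (hfcont.mono (hIoo.uIcc_subset ha hb)).intervalIntegrable
  -- strict antitonicity
  have hanti : StrictAntiOn (fun s => Real.exp (∫ τ in s₀..s, f τ)) (Set.Ioo (0:ℝ) 1) := by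
    intro a ha b hb hab
    simp only
    rw [Real.exp_lt_exp]
    have hsplit : (∫ τ in s₀..a, f τ) + (∫ τ in a..b, f τ) = ∫ τ in s₀..b, f τ :=
      intervalIntegral.integral_add_adjacent_intervals (hint s₀ hs₀ a ha) (hint a ha b hb)
    have hIab : Set.Ioo a b ⊆ Set.Ioo (0:ℝ) 1 :=
      Set.Ioo_subset_Ioo (le_of_lt ha.1) (le_of_lt hb.2)
    have hpos' : 0 < ∫ τ in a..b, -f τ := by
      apply intervalIntegral.intervalIntegral_pos_of_pos_on
      · exact (hint a ha b hb).neg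
      · intro x hx
        simp only [hf, neg_pos]
        exact inv_lt_zero.2 (hneg x (hIab hx))
      · exact hab
    rw [intervalIntegral.integral_neg] at hpos'
    linarith
  refine ⟨hanti, ?_⟩
  -- the limit
  have hbound : ∀ s ∈ Set.Ioo s₀ 1,
      (∫ τ in s₀..s, f τ) ≤ Real.log (1 - s) - Real.log (1 - s₀) := by
    intro s hs
    have hsmem : s ∈ Set.Ioo (0:ℝ) 1 := ⟨lt_trans hs₀.1 hs.1, hs.2⟩
    have hIcc : Set.Icc s₀ s ⊆ Set.Ioo (0:ℝ) 1 := fun x hx =>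
      ⟨lt_of_lt_of_le hs₀.1 hx.1, lt_of_le_of_lt hx.2 hsmem.2⟩
    have huIcc : Set.uIcc s₀ s ⊆ Set.Ioo (0:ℝ) 1 := by
      rw [Set.uIcc_of_le (le_of_lt hs.1)]; exact hIcc
    -- integral of the comparison function
    have hcomp : (∫ τ in s₀..s, -(1 - τ)⁻¹) = Real.log (1 - s) - Real.log (1 - s₀) := by
      have := intervalIntegral.integral_eq_sub_of_hasDerivAt
        (f := fun τ => Real.log (1 - τ)) (f' := fun τ => -(1 - τ)⁻¹) (a := s₀) (b := s)
        (fun x hx => by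
          have h1x : (1:ℝ) - x ≠ 0 := by
            have := (huIcc hx).2; intro h; linarith [this]
          have hd : HasDerivAt (fun τ : ℝ => 1 - τ) (-1 : ℝ) x := by
            simpa using (hasDerivAt_id x).const_sub (1:ℝ)
          have := (Real.hasDerivAt_log h1x).comp x hd
          exact this.congr_deriv (by ring))
        (by
          apply ContinuousOn.intervalIntegrable
          apply ContinuousOn.neg
          apply ContinuousOn.inv₀ (continuousOn_const.sub continuousOn_id)
          intro x hx
          have := (huIcc hx).2; intro h; simp only [Pi.sub_apply, id_eq] at h; linarith [this])
      simpa using this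
    rw [← hcomp]
    apply intervalIntegral.integral_mono_on (le_of_lt hs.1) (hint s₀ hs₀ s hsmem)
    · apply ContinuousOn.intervalIntegrable
      apply ContinuousOn.neg
      apply ContinuousOn.inv₀ (continuousOn_const.sub continuousOn_id)
      intro x hx
      rw [Set.uIcc_of_le (le_of_lt hs.1)] at hx
      have := (hIcc hx).2; intro h; simp only [Pi.sub_apply, id_eq] at h; linarith [this]
    · intro x hx
      have hxm : x ∈ Set.Ioo (0:ℝ) 1 := hIcc hx
      have h1 : 0 < Θ x - x := sub_pos.2 (hgt x hxm)
      have h2 : Θ x - x ≤ 1 - x := by linarith [hlt1 x hxm]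
      have h3 : (1 - x)⁻¹ ≤ (Θ x - x)⁻¹ := by
        apply inv_anti₀ h1 h2
      have : f x = -(Θ x - x)⁻¹ := by
        simp only [hf]
        rw [← inv_neg]; ring_nf
      rw [this]
      linarith
  have hlogtend : Tendsto (fun s => Real.log (1 - s) - Real.log (1 - s₀))
      (nhdsWithin 1 (Set.Iio 1)) atBot := by
    apply Filter.tendsto_atBot_add_const_right
    have h1 : Tendsto (fun s : ℝ => 1 - s) (nhdsWithin 1 (Set.Iio 1))
        (nhdsWithin 0 (Set.Ioi 0)) := by
      apply tendsto_nhdsWithin_of_tendsto_nhds_of_eventually_within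
      · have hc : Tendsto (fun s : ℝ => 1 - s) (nhds 1) (nhds 0) :=
          ((continuous_const.sub continuous_id').tendsto' 1 0 (by norm_num))
        exact hc.mono_left nhdsWithin_le_nhds
      · filter_upwards [self_mem_nhdsWithin] with x hx
        simp only [Set.mem_Iio] at hx
        simp [Set.mem_Ioi]; linarith
    exact Real.tendsto_log_nhdsGT_zero.comp h1
  have hinttend : Tendsto (fun s => ∫ τ in s₀..s, f τ) (nhdsWithin 1 (Set.Iio 1)) atBot := by
    apply tendsto_atBot_mono' _ _ hlogtend
    have hmem : Set.Ioo s₀ 1 ∈ nhdsWithin 1 (Set.Iio 1) := by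
      apply mem_nhdsWithin.2
      exact ⟨Set.Ioi s₀, isOpen_Ioi, hs₀.2, fun x hx => ⟨hx.1, hx.2⟩⟩
    filter_upwards [hmem] with s hs
    exact hbound s hs
  exact Real.tendsto_exp_atBot.comp hinttend
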